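/- Let ω : T → ℝ be integrable on the unit circle. Then for (Lebesgue) almost every λ ∈ ℝ, the function ζ ↦ ln|ω(ζ) − λ| belongs to L¹(T), and ln|ω(·) − λ − iε| converges to ln|ω(·) − λ| in L¹(T) as ε → 0. -/

import Mathlib

open MeasureTheory Complex AddCircle Filter

open Set


lemma intervalIntegrable_log_total (a b : ℝ) :
    IntervalIntegrable Real.log volume a b := by
  suffices h : ∀ c : ℝ, IntervalIntegrable Real.log volume 0 c by
    exact (h a).symm.trans (h b)
  have key : ∀ c : ℝ, 0 ≤ c → IntervalIntegrable Real.log volume 0 c := by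
    intro c hc
    rw [intervalIntegrable_iff, uIoc_of_le hc]
    have hrpow : IntegrableOn (fun y : ℝ => y ^ (-(1/2) : ℝ)) (Ioc 0 c) volume := by
      have := intervalIntegral.intervalIntegrable_rpow' (a := 0) (b := c) (r := -(1/2)) (by norm_num)
      rwa [intervalIntegrable_iff, uIoc_of_le hc] at this
    have hbound : IntegrableOn (fun y : ℝ => 2 * y ^ (-(1/2) : ℝ) + c) (Ioc 0 c) volume := by
      refine (hrpow.const_mul 2).add ?_
      exact integrableOn_const (by simp [Real.volume_Ioc])
    refine Integrable.mono' hbound (Real.measurable_log.aestronglyMeasurable) ?_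
    refine (ae_restrict_iff' measurableSet_Ioc).2 (ae_of_all _ fun y hy => ?_)
    obtain ⟨hy0, hyc⟩ := hy
    have hrp : (0:ℝ) < y ^ (-(1/2):ℝ) := Real.rpow_pos_of_pos hy0 _
    rcases le_or_gt 1 y with h1 | h1
    · have h2 : Real.log y ≤ y - 1 := Real.log_le_sub_one_of_pos hy0
      have h3 : 0 ≤ Real.log y := Real.log_nonneg h1
      rw [Real.norm_eq_abs, _root_.abs_of_nonneg h3]
      nlinarith
    · have hlog : Real.log y < 0 := Real.log_neg hy0 h1
      rw [Real.norm_eq_abs, abs_of_neg hlog]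
      have h4 : Real.log (y ^ (-(1/2):ℝ)) = (-(1/2)) * Real.log y := Real.log_rpow hy0 (-(1/2))
      have h5 : Real.log (y ^ (-(1/2):ℝ)) ≤ y ^ (-(1/2):ℝ) - 1 :=
        Real.log_le_sub_one_of_pos hrp
      nlinarith
  intro c
  rcases le_total 0 c with hc | hc
  · exact key c hc
  · rw [IntervalIntegrable.iff_comp_neg]
    have h : (fun x : ℝ => Real.log (-x)) = Real.log := funext Real.log_neg_eq_log
    rw [h, neg_zero]
    exact key (-c) (by linarith)

lemma intervalIntegrable_log_abs_sub (x a b : ℝ) :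
    IntervalIntegrable (fun t => Real.log |t - x|) volume a b := by
  have h : (fun t : ℝ => Real.log |t - x|) = fun t => Real.log (t - x) := by
    funext t; exact Real.log_abs _
  rw [h]
  simpa using (intervalIntegrable_log_total (a - x) (b - x)).comp_sub_right x

lemma intervalIntegrable_abs_log_abs_sub (x a b : ℝ) :
    IntervalIntegrable (fun t => |Real.log (|t - x|)|) volume a b := by
  simpa [Real.norm_eq_abs] using (intervalIntegrable_log_abs_sub x a b).norm

lemma integrableOn_log_abs_sub_Ioo (x a b : ℝ) :
    IntegrableOn (fun t => Real.log |t - x|) (Ioo a b) volume := by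
  rcases le_total a b with h | h
  · have := intervalIntegrable_log_abs_sub x a b
    rw [intervalIntegrable_iff, uIoc_of_le h] at this
    exact this.mono_set Ioo_subset_Ioc_self
  · rw [Ioo_eq_empty (not_lt.2 h)]; exact integrableOn_empty

lemma integrableOn_abs_log_abs_sub_Ioo (x a b : ℝ) :
    IntegrableOn (fun t => |Real.log (|t - x|)|) (Ioo a b) volume := by
  have := integrableOn_log_abs_sub_Ioo x a b
  simpa [Real.norm_eq_abs, IntegrableOn] using this.norm

lemma integrableOn_abs_log_abs_sub_Icc (x a b : ℝ) :
    IntegrableOn (fun t => |Real.log (|t - x|)|) (Icc a b) volume := by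
  rcases le_total a b with h | h
  · have := intervalIntegrable_abs_log_abs_sub x a b
    rw [intervalIntegrable_iff, uIoc_of_le h] at this
    exact (integrableOn_Icc_iff_integrableOn_Ioc).2 this
  · rcases eq_or_lt_of_le h with rfl | h'
    · have := intervalIntegrable_abs_log_abs_sub x b b
      rw [intervalIntegrable_iff, uIoc_of_le le_rfl] at this
      exact (integrableOn_Icc_iff_integrableOn_Ioc).2 this
    · rw [Icc_eq_empty (not_le.2 h')]; exact integrableOn_empty

lemma integral_window (x : ℝ) :
    ∫ t in Icc (x-1) (x+1), |Real.log (|t - x|)| =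
      ∫ t in Icc (-1:ℝ) 1, |Real.log (|t|)| := by
  rw [integral_Icc_eq_integral_Ioc, integral_Icc_eq_integral_Ioc,
    ← intervalIntegral.integral_of_le (by linarith : x - 1 ≤ x + 1),
    ← intervalIntegral.integral_of_le (by linarith : (-1:ℝ) ≤ 1)]
  have := intervalIntegral.integral_comp_sub_right (a := x - 1) (b := x + 1)
    (fun t => |Real.log (|t|)|) x
  simpa using this


lemma setIntegral_abs_log_bound (N x : ℝ) (hN : 0 ≤ N) :
    ∫ t in Ioo (-N) N, |Real.log (|t - x|)| ≤
      (∫ t in Icc (-1:ℝ) 1, |Real.log (|t|)|) + 2 * N * Real.log (|x| + N + 1) := by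
  set f := fun t : ℝ => |Real.log (|t - x|)| with hf
  have hint : IntegrableOn f (Ioo (-N) N) volume := integrableOn_abs_log_abs_sub_Ioo x _ _
  have hIcc : IntegrableOn f (Icc (x-1) (x+1)) volume := integrableOn_abs_log_abs_sub_Icc x _ _
  have hsplit : ∫ t in Ioo (-N) N, f t =
      (∫ t in Ioo (-N) N ∩ Icc (x-1) (x+1), f t) +
      ∫ t in Ioo (-N) N \ Icc (x-1) (x+1), f t :=
    (integral_inter_add_diff measurableSet_Icc hint).symm
  have h1 : (∫ t in Ioo (-N) N ∩ Icc (x-1) (x+1), f t) ≤ ∫ t in Icc (-1:ℝ) 1, |Real.log (|t|)| := by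
    rw [← integral_window x]
    refine setIntegral_mono_set hIcc ?_ (HasSubset.Subset.eventuallyLE inter_subset_right)
    exact ae_of_all _ fun t => abs_nonneg _
  set M := Real.log (|x| + N + 1) with hM
  have hM0 : 0 ≤ M := Real.log_nonneg (by linarith [abs_nonneg x])
  have h2 : (∫ t in Ioo (-N) N \ Icc (x-1) (x+1), f t) ≤ M * (2 * N) := by
    have hb : ∀ t ∈ Ioo (-N) N \ Icc (x-1) (x+1), ‖f t‖ ≤ M := by
      rintro t ⟨⟨ht1, ht2⟩, ht3⟩
      have h1' : 1 < |t - x| := by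
        by_contra hcon
        push_neg at hcon
        obtain ⟨hl, hr⟩ := abs_le.1 hcon
        exact ht3 ⟨by linarith, by linarith⟩
      have hlog0 : 0 ≤ Real.log (|t - x|) := Real.log_nonneg h1'.le
      have hle : |t - x| ≤ |x| + N + 1 := by
        have : |t| < N := abs_lt.2 ⟨ht1, ht2⟩
        calc |t - x| ≤ |t| + |x| := abs_sub _ _
        _ ≤ |x| + N + 1 := by linarith
      have : Real.log (|t - x|) ≤ M := Real.log_le_log (by linarith) hle
      simp only [hf, Real.norm_eq_abs, _root_.abs_abs, _root_.abs_of_nonneg hlog0]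
      exact this
    have hvol : volume (Ioo (-N) N \ Icc (x-1) (x+1)) < ⊤ :=
      lt_of_le_of_lt (measure_mono diff_subset) (by simp [Real.volume_Ioo])
    have := norm_setIntegral_le_of_norm_le_const (μ := volume) hvol hb
    have hv2 : (volume (Ioo (-N) N \ Icc (x-1) (x+1))).toReal ≤ 2 * N := by
      have hle : volume (Ioo (-N) N \ Icc (x-1) (x+1)) ≤ ENNReal.ofReal (2 * N) := by
        refine le_trans (measure_mono diff_subset) ?_
        rw [Real.volume_Ioo]
        exact ENNReal.ofReal_le_ofReal (by linarith)
      exact ENNReal.toReal_le_of_le_ofReal (by linarith) hle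
    calc (∫ t in Ioo (-N) N \ Icc (x-1) (x+1), f t)
        ≤ ‖∫ t in Ioo (-N) N \ Icc (x-1) (x+1), f t‖ := le_abs_self _
      _ ≤ M * (volume (Ioo (-N) N \ Icc (x-1) (x+1))).toReal := this
      _ ≤ M * (2 * N) := by exact mul_le_mul_of_nonneg_left hv2 hM0
  rw [hsplit]
  have h3 := add_le_add h1 h2
  linarith


lemma abs_complex_aux (x lam ε : ℝ) :
    ‖(x:ℂ) - lam - ε * Complex.I‖ = Real.sqrt ((x - lam)^2 + ε^2) := by
  rw [Complex.norm_def, Complex.normSq_apply]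
  simp [Complex.sub_re, Complex.sub_im, Complex.mul_re, Complex.mul_im]
  ring_nf

lemma log_sq_half (r : ℝ) : Real.log (|r|) = Real.log (r^2) / 2 := by
  rw [← _root_.sq_abs, Real.log_pow]
  push_cast
  ring

lemma tendsto_L1_log {α : Type*} [MeasurableSpace α] (μ : Measure α) [IsProbabilityMeasure μ]
    (g : α → ℝ) (hg : Measurable g) (lam : ℝ)
    (hgi : Integrable g μ)
    (h0 : μ {ζ | g ζ = lam} = 0)
    (hInt : Integrable (fun ζ => Real.log (|g ζ - lam|)) μ) :
    Tendsto (fun ε : ℝ =>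
        ∫ ζ, |Real.log (‖(g ζ : ℂ) - lam - ε * Complex.I‖)
              - Real.log (|g ζ - lam|)| ∂μ)
      (nhdsWithin 0 {(0:ℝ)}ᶜ) (nhds 0) := by
  have hae : ∀ᵐ ζ ∂μ, g ζ ≠ lam := by
    rw [ae_iff]
    simpa using h0
  set l := nhdsWithin (0:ℝ) {(0:ℝ)}ᶜ with hl
  set F := fun (ε : ℝ) (ζ : α) =>
    |Real.log (‖(g ζ : ℂ) - lam - ε * Complex.I‖) - Real.log (|g ζ - lam|)| with hF
  set bound := fun ζ => Real.log ((g ζ - lam)^2 + 1) / 2 - Real.log (|g ζ - lam|) with hbd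
  have hb1 : Integrable (fun ζ => Real.log ((g ζ - lam)^2 + 1) / 2) μ := by
    refine Integrable.mono' (hgi.abs.add (integrable_const |lam|)) ?_ (ae_of_all _ fun ζ => ?_)
    · exact ((Real.measurable_log.comp
        (((hg.sub measurable_const).pow_const 2).add_const 1)).div_const 2).aestronglyMeasurable
    · set r := g ζ - lam with hr
      have h1 : (0:ℝ) ≤ Real.log (r^2 + 1) := Real.log_nonneg (by nlinarith [sq_nonneg r])
      have h2 : Real.log (r^2 + 1) ≤ 2 * |r| := by
        have ha : r^2 + 1 ≤ (1 + |r|)^2 := by nlinarith [abs_nonneg r, _root_.sq_abs r]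
        have hb' : Real.log (r^2 + 1) ≤ Real.log ((1 + |r|)^2) :=
          Real.log_le_log (by nlinarith [sq_nonneg r]) ha
        have hc : Real.log ((1 + |r|)^2) = 2 * Real.log (1 + |r|) := by
          rw [Real.log_pow]; push_cast; ring
        have hd : Real.log (1 + |r|) ≤ |r| := by
          have := Real.log_le_sub_one_of_pos (show (0:ℝ) < 1 + |r| by positivity)
          linarith
        linarith
      have h3 : |r| ≤ |g ζ| + |lam| := abs_sub _ _
      have h0' : (0:ℝ) ≤ Real.log (r^2 + 1) / 2 := by linarith
      rw [Real.norm_eq_abs, _root_.abs_of_nonneg h0']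
      simp only [Pi.add_apply]
      linarith
  have hbound_int : Integrable bound μ := hb1.sub hInt
  have key := tendsto_integral_filter_of_dominated_convergence (μ := μ) (l := l)
      (F := F) (f := fun _ => (0:ℝ)) (bound := bound) ?_ ?_ hbound_int ?_
  · rw [integral_zero] at key
    exact key
  · refine Eventually.of_forall fun ε => ?_
    have h1 : Measurable fun ζ => ‖(g ζ : ℂ) - lam - ε * Complex.I‖ :=
      continuous_norm.measurable.comp
        (((Complex.measurable_ofReal.comp hg).sub measurable_const).sub measurable_const)
    exact ((Real.measurable_log.comp h1).sub
      (Real.measurable_log.comp (hg.sub measurable_const).abs)).abs.aestronglyMeasurable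
  · -- bound
    have hsmall : ∀ᶠ ε : ℝ in l, |ε| ≤ 1 := by
      have h : ∀ᶠ ε : ℝ in nhds 0, |ε| ≤ 1 := by
        filter_upwards [Metric.ball_mem_nhds (0:ℝ) one_pos] with ε hε
        exact (mem_ball_zero_iff.1 hε).le
      exact h.filter_mono nhdsWithin_le_nhds
    filter_upwards [hsmall] with ε hε
    filter_upwards [hae] with ζ hr
    have hr0 : g ζ - lam ≠ 0 := sub_ne_zero.2 hr
    have hr2 : (0:ℝ) < (g ζ - lam)^2 :=
      lt_of_le_of_ne (sq_nonneg _) (Ne.symm (pow_ne_zero 2 hr0))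
    have hlogA : Real.log (‖(g ζ : ℂ) - lam - ε * Complex.I‖)
        = Real.log ((g ζ - lam)^2 + ε^2) / 2 := by
      rw [abs_complex_aux (g ζ) lam ε, Real.log_sqrt (by positivity)]
    have hlogr : Real.log (|g ζ - lam|) = Real.log ((g ζ - lam)^2) / 2 := log_sq_half _
    have hmono1 : Real.log ((g ζ - lam)^2) ≤ Real.log ((g ζ - lam)^2 + ε^2) :=
      Real.log_le_log hr2 (by nlinarith [sq_nonneg ε])
    have hmono2 : Real.log ((g ζ - lam)^2 + ε^2) ≤ Real.log ((g ζ - lam)^2 + 1) := by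
      have hε2 : ε^2 ≤ 1 := by nlinarith [_root_.sq_abs ε, abs_nonneg ε]
      exact Real.log_le_log (by positivity) (by linarith)
    have hnn : (0:ℝ) ≤ Real.log (‖(g ζ : ℂ) - lam - ε * Complex.I‖)
        - Real.log (|g ζ - lam|) := by
      rw [hlogA, hlogr]; linarith
    have hnorm : ‖F ε ζ‖ = Real.log ((g ζ - lam)^2 + ε^2) / 2
        - Real.log ((g ζ - lam)^2) / 2 := by
      simp only [hF]
      rw [Real.norm_eq_abs, _root_.abs_abs, _root_.abs_of_nonneg hnn, hlogA, hlogr]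
    have hbζ : bound ζ = Real.log ((g ζ - lam)^2 + 1) / 2
        - Real.log ((g ζ - lam)^2) / 2 := by
      simp only [hbd]
      rw [hlogr]
    rw [hnorm, hbζ]
    linarith
  · -- pointwise limit
    filter_upwards [hae] with ζ hr
    have hr0 : g ζ - lam ≠ 0 := sub_ne_zero.2 hr
    have hq : (0:ℝ) < (g ζ - lam)^2 + (0:ℝ)^2 := by
      have h' : (0:ℝ) < (g ζ - lam)^2 :=
        lt_of_le_of_ne (sq_nonneg _) (Ne.symm (pow_ne_zero 2 hr0))
      nlinarith
    have h2 : ‖(g ζ : ℂ) - lam - ((0:ℝ):ℂ) * Complex.I‖ ≠ 0 := by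
      rw [abs_complex_aux (g ζ) lam 0]
      exact Real.sqrt_ne_zero'.2 hq
    have h1 : Continuous fun ε : ℝ => ((g ζ : ℂ) - lam - ε * Complex.I) := by continuity
    have hcA : Continuous fun ε : ℝ => ‖(g ζ : ℂ) - lam - ε * Complex.I‖ :=
      continuous_norm.comp h1
    have hlogc : ContinuousAt
        (fun ε : ℝ => Real.log (‖(g ζ : ℂ) - lam - ε * Complex.I‖)) 0 :=
      ContinuousAt.log hcA.continuousAt h2
    have hcont : ContinuousAt (fun ε : ℝ =>
        |Real.log (‖(g ζ : ℂ) - lam - ε * Complex.I‖)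
          - Real.log (|g ζ - lam|)|) 0 :=
      (hlogc.sub continuousAt_const).abs
    have htd : Tendsto (fun ε : ℝ =>
        |Real.log (‖(g ζ : ℂ) - lam - ε * Complex.I‖)
          - Real.log (|g ζ - lam|)|) l
        (nhds (|Real.log (‖(g ζ : ℂ) - lam - ((0:ℝ):ℂ) * Complex.I‖)
          - Real.log (|g ζ - lam|)|)) :=
      hcont.tendsto.mono_left nhdsWithin_le_nhds
    have hval : |Real.log (‖(g ζ : ℂ) - lam - ((0:ℝ):ℂ) * Complex.I‖)
        - Real.log (|g ζ - lam|)| = 0 := by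
      rw [abs_complex_aux (g ζ) lam 0]
      simp [Real.sqrt_sq_eq_abs]
    rw [hval] at htd
    exact htd



/-- For an integrable real symbol `ω` on the unit circle, for almost every `λ ∈ ℝ` the
function `ζ ↦ ln|ω(ζ) - λ|` is integrable on the circle, and
`ln|ω(·) - λ - iε| → ln|ω(·) - λ|` in `L¹(T)` as `ε → 0`. -/
theorem log_integrable_ae [Fact (0 < 2 * Real.pi)]
    (ω : AddCircle (2 * Real.pi) → ℝ) (hω : Integrable ω haarAddCircle) :
    ∀ᵐ lam ∂(volume : Measure ℝ),
      Integrable (fun ζ => Real.log |ω ζ - lam|) haarAddCircle ∧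
      Tendsto (fun ε : ℝ =>
          ∫ ζ, |Real.log (‖(ω ζ : ℂ) - lam - ε * Complex.I‖)
                - Real.log (|ω ζ - lam| : ℝ)| ∂haarAddCircle)
        (nhdsWithin 0 {(0 : ℝ)}ᶜ) (nhds 0) := by
  classical
  have hg : Measurable (hω.1.mk ω) := hω.1.stronglyMeasurable_mk.measurable
  set g := hω.1.mk ω with hgdef
  have hgae : ω =ᵐ[haarAddCircle] g := hω.1.ae_eq_mk
  have hgi : Integrable g haarAddCircle := hω.congr hgae
  -- Step 1: a.e. λ, fibers are null
  have hS : MeasurableSet {p : ℝ × AddCircle (2*Real.pi) | g p.2 = p.1} :=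
    measurableSet_eq_fun (hg.comp measurable_snd) measurable_fst
  have fiber : ∀ᵐ lam ∂(volume : Measure ℝ), haarAddCircle {ζ | g ζ = lam} = 0 := by
    have key : ∫⁻ lam, haarAddCircle {ζ | g ζ = lam} ∂(volume : Measure ℝ) = 0 := by
      have h1 : ∀ lam : ℝ, haarAddCircle {ζ | g ζ = lam}
          = ∫⁻ ζ, ({p : ℝ × AddCircle (2*Real.pi) | g p.2 = p.1}).indicator
              (fun _ => (1:ENNReal)) (lam, ζ) ∂haarAddCircle := by
        intro lam
        have he : (fun ζ => ({p : ℝ × AddCircle (2*Real.pi) | g p.2 = p.1}).indicator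
            (fun _ => (1:ENNReal)) (lam, ζ))
            = fun ζ => ({ζ : AddCircle (2*Real.pi) | g ζ = lam}).indicator
              (fun _ => (1:ENNReal)) ζ := by
          funext ζ
          by_cases h : g ζ = lam <;> simp [Set.indicator_apply, h]
        rw [he, lintegral_indicator (show MeasurableSet {ζ : AddCircle (2*Real.pi) | g ζ = lam}
          from hg (measurableSet_singleton lam)), setLIntegral_one]
      have h2 : ∀ ζ : AddCircle (2*Real.pi),
          ∫⁻ lam, ({p : ℝ × AddCircle (2*Real.pi) | g p.2 = p.1}).indicator
            (fun _ => (1:ENNReal)) (lam, ζ) ∂(volume : Measure ℝ) = 0 := by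
        intro ζ
        have he : (fun lam : ℝ => ({p : ℝ × AddCircle (2*Real.pi) | g p.2 = p.1}).indicator
            (fun _ => (1:ENNReal)) (lam, ζ))
            = fun lam => ({g ζ} : Set ℝ).indicator (fun _ => (1:ENNReal)) lam := by
          funext lam
          by_cases h : g ζ = lam <;> simp [Set.indicator_apply, h, eq_comm]
        rw [he, lintegral_indicator (measurableSet_singleton _), setLIntegral_one,
          Real.volume_singleton]
      calc ∫⁻ lam, haarAddCircle {ζ | g ζ = lam} ∂(volume : Measure ℝ)
          = ∫⁻ lam, ∫⁻ ζ, ({p : ℝ × AddCircle (2*Real.pi) | g p.2 = p.1}).indicator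
              (fun _ => (1:ENNReal)) (lam, ζ) ∂haarAddCircle ∂(volume : Measure ℝ) := by
            exact lintegral_congr fun lam => h1 lam
        _ = ∫⁻ ζ, ∫⁻ lam, ({p : ℝ × AddCircle (2*Real.pi) | g p.2 = p.1}).indicator
              (fun _ => (1:ENNReal)) (lam, ζ) ∂(volume : Measure ℝ) ∂haarAddCircle :=
            lintegral_lintegral_swap ((measurable_const.indicator hS).aemeasurable)
        _ = 0 := by simp [h2]
    have hmeas : Measurable fun lam : ℝ => haarAddCircle {ζ | g ζ = lam} :=
      measurable_measure_prodMk_left hS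
    have := (lintegral_eq_zero_iff hmeas).1 key
    filter_upwards [this] with lam h using h
  -- Step 2: a.e. λ, integrability
  have intae : ∀ᵐ lam ∂(volume : Measure ℝ),
      Integrable (fun ζ => Real.log (|g ζ - lam|)) haarAddCircle := by
    have main : ∀ N : ℕ, ∀ᵐ lam ∂((volume : Measure ℝ).restrict (Ioo (-(N:ℝ)) N)),
        Integrable (fun ζ => Real.log (|g ζ - lam|)) haarAddCircle := by
      intro N
      set ν := (volume : Measure ℝ).restrict (Ioo (-(N:ℝ)) N) with hν
      have hFmeas : Measurable fun p : AddCircle (2*Real.pi) × ℝ => Real.log (|g p.1 - p.2|) :=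
        Real.measurable_log.comp ((hg.comp measurable_fst).sub measurable_snd).abs
      have hprod : Integrable (fun p : AddCircle (2*Real.pi) × ℝ => Real.log (|g p.1 - p.2|))
          (haarAddCircle.prod ν) := by
        refine (integrable_prod_iff hFmeas.aestronglyMeasurable).2 ⟨?_, ?_⟩
        · refine ae_of_all _ fun ζ => ?_
          have he : (fun lam => Real.log (|g ζ - lam|))
              = fun lam => Real.log (|lam - g ζ|) := by
            funext lam; rw [abs_sub_comm]
          show Integrable (fun lam => Real.log (|g ζ - lam|)) ν
          rw [hν, he]
          exact integrableOn_log_abs_sub_Ioo (g ζ) _ _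
        · set K := ∫ t in Icc (-1:ℝ) 1, |Real.log (|t|)| with hK
          have hlogint : Integrable (fun ζ => Real.log (|g ζ| + N + 1)) haarAddCircle := by
            refine Integrable.mono' (hgi.abs.add (integrable_const ((N:ℝ) + 1)))
              ?_ (ae_of_all _ fun ζ => ?_)
            · exact (Real.measurable_log.comp
                ((hg.abs.add_const (N:ℝ)).add_const 1)).aestronglyMeasurable
            · have hb0 : (0:ℝ) ≤ |g ζ| := abs_nonneg _
              have hb1 : (0:ℝ) ≤ (N:ℝ) := Nat.cast_nonneg N
              have h1 : (0:ℝ) ≤ Real.log (|g ζ| + N + 1) :=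
                Real.log_nonneg (by linarith)
              have h2 : Real.log (|g ζ| + N + 1) ≤ |g ζ| + N + 1 - 1 :=
                Real.log_le_sub_one_of_pos (by linarith)
              rw [Real.norm_eq_abs, _root_.abs_of_nonneg h1]
              simp only [Pi.add_apply]
              linarith
          refine Integrable.mono' ((integrable_const K).add
            (hlogint.const_mul (2*(N:ℝ)))) ?_ ?_
          · exact (hFmeas.norm.aestronglyMeasurable).integral_prod_right'
          · refine ae_of_all _ fun ζ => ?_
            simp only [Pi.add_apply]
            have hnn : (0:ℝ) ≤ ∫ lam, ‖Real.log (|g ζ - lam|)‖ ∂ν :=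
              integral_nonneg fun lam => norm_nonneg _
            rw [Real.norm_eq_abs, _root_.abs_of_nonneg hnn]
            have he : (fun lam => ‖Real.log (|g ζ - lam|)‖)
                = fun lam => |Real.log (|lam - g ζ|)| := by
              funext lam; rw [Real.norm_eq_abs, abs_sub_comm]
            calc ∫ lam, ‖Real.log (|g ζ - lam|)‖ ∂ν
                = ∫ lam in Ioo (-(N:ℝ)) N, |Real.log (|lam - g ζ|)| := by rw [hν, he]
              _ ≤ K + 2 * N * Real.log (|g ζ| + N + 1) :=
                  setIntegral_abs_log_bound (N:ℝ) (g ζ) (Nat.cast_nonneg N)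
      exact hprod.prod_left_ae
    rw [ae_iff]
    set B := {lam : ℝ | ¬ Integrable (fun ζ => Real.log (|g ζ - lam|)) haarAddCircle} with hB
    have hsub : B ⊆ ⋃ N : ℕ, B ∩ Ioo (-(N:ℝ)) N := by
      intro lam hl
      obtain ⟨N, hN⟩ := exists_nat_gt |lam|
      have h1 := abs_lt.1 hN
      exact mem_iUnion.2 ⟨N, hl, h1.1, h1.2⟩
    refine measure_mono_null hsub (measure_iUnion_null fun N => ?_)
    have h0 : ((volume : Measure ℝ).restrict (Ioo (-(N:ℝ)) N)) B = 0 := by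
      have h := main N
      rw [ae_iff] at h
      exact h
    rw [← Measure.restrict_apply' measurableSet_Ioo] at *
    exact h0
  -- Step 3: conclude
  filter_upwards [fiber, intae] with lam h0 hInt
  have hInt' : Integrable (fun ζ => Real.log |ω ζ - lam|) haarAddCircle := by
    refine hInt.congr ?_
    filter_upwards [hgae] with ζ h
    rw [h]
  refine ⟨hInt', ?_⟩
  have htend := tendsto_L1_log haarAddCircle g hg lam hgi h0 hInt
  have heq : (fun ε : ℝ => ∫ ζ, |Real.log (‖(ω ζ : ℂ) - lam - ε * Complex.I‖)
        - Real.log (|ω ζ - lam| : ℝ)| ∂haarAddCircle)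
      = fun ε : ℝ => ∫ ζ, |Real.log (‖(g ζ : ℂ) - lam - ε * Complex.I‖)
        - Real.log (|g ζ - lam|)| ∂haarAddCircle := by
    funext ε
    refine integral_congr_ae ?_
    filter_upwards [hgae] with ζ h
    rw [h]
  rw [heq]
  exact htend
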